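/- Let X and Y be finite nonempty sets, θ, θ_ref : X × Y → ℝ, β > 0, and r : X × Y → ℝ. Define r̂_θ(x,y) = β·log(π_θ(y|x)/π_{θ_ref}(y|x)) with π_θ(y|x) = exp(θ(x,y)) / Σ_{y'∈Y} exp(θ(x,y')), M₁(x,y,y';θ) = |(r(x,y) − r(x,y')) − (r̂_θ(x,y) − r̂_θ(x,y'))|, and Dist(θ) = sqrt( (1/(|X|·|Y|²)) · Σ_{x∈X} Σ_{y,y'∈Y} M₁(x,y,y';θ)² ). Then max_{x∈X, y,y'∈Y} M₁(x,y,y';θ)² ≥ 2·Dist(θ)². -/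

import Mathlib

/-- the maximal squared `M₁` gap over all triples `(x,y,y')` is at least
twice the mean squared gap `Dist(θ)²`. -/
theorem max_sq_M1_ge_two_dist_sq
    {X Y : Type*} [Fintype X] [Nonempty X] [Fintype Y] [Nonempty Y]
    (θ θref : X × Y → ℝ) (β : ℝ) (hβ : 0 < β) (r : X × Y → ℝ)
    (pol : (X × Y → ℝ) → X → Y → ℝ)
    (hpol : ∀ φ : X × Y → ℝ, ∀ x y,
      pol φ x y = Real.exp (φ (x, y)) / ∑ y', Real.exp (φ (x, y')))
    (rhat : X → Y → ℝ)
    (hrhat : ∀ x y, rhat x y = β * Real.log (pol θ x y / pol θref x y))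
    (M₁ : X → Y → Y → ℝ)
    (hM₁ : ∀ x y y', M₁ x y y' = |(r (x, y) - r (x, y')) - (rhat x y - rhat x y')|)
    (Dist : ℝ)
    (hDist : Dist = Real.sqrt ((1 / (Fintype.card X * (Fintype.card Y : ℝ) ^ 2)) *
      ∑ x, ∑ y, ∑ y', (M₁ x y y') ^ 2)) :
    2 * Dist ^ 2 ≤
      (Finset.univ : Finset (X × Y × Y)).sup'
        (by simp [Finset.univ_nonempty])
        (fun d => (M₁ d.1 d.2.1 d.2.2) ^ 2) := by
  classical
  set S : ℝ := (Finset.univ : Finset (X × Y × Y)).sup'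
      (by simp [Finset.univ_nonempty])
      (fun d => (M₁ d.1 d.2.1 d.2.2) ^ 2) with hSdef
  have hkey : ∀ x y y', (M₁ x y y') ^ 2 ≤ S := fun x y y' =>
    Finset.le_sup' (f := fun d : X × Y × Y => (M₁ d.1 d.2.1 d.2.2) ^ 2)
      (Finset.mem_univ (x, y, y'))
  obtain ⟨x0⟩ := (inferInstance : Nonempty X)
  obtain ⟨y0⟩ := (inferInstance : Nonempty Y)
  have hSnn : 0 ≤ S := le_trans (sq_nonneg _) (hkey x0 y0 y0)
  set n : ℝ := (Fintype.card Y : ℝ) with hn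
  set m : ℝ := (Fintype.card X : ℝ) with hm
  have hnpos : 0 < n := by rw [hn]; exact_mod_cast Fintype.card_pos
  have hmpos : 0 < m := by rw [hm]; exact_mod_cast Fintype.card_pos
  -- per-x bound
  have hx : ∀ x : X, ∑ y, ∑ y', (M₁ x y y') ^ 2 ≤ n ^ 2 * S / 2 := by
    intro x
    set δ : Y → ℝ := fun y => r (x, y) - rhat x y with hδ
    have hMδ : ∀ y y', (M₁ x y y') ^ 2 = (δ y - δ y') ^ 2 := by
      intro y y'
      rw [hM₁, sq_abs]
      simp only [hδ]
      ring_nf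
    have hne : (Finset.univ : Finset Y).Nonempty := Finset.univ_nonempty
    set a : ℝ := Finset.univ.sup' hne δ with ha
    set b : ℝ := Finset.univ.inf' hne δ with hb
    obtain ⟨ya, _, hya⟩ := Finset.exists_mem_eq_sup' hne δ
    obtain ⟨yb, _, hyb⟩ := Finset.exists_mem_eq_inf' hne δ
    have hab : (a - b) ^ 2 ≤ S := by
      have := hkey x ya yb
      rw [hMδ] at this
      rw [ha, hb, hya, hyb]
      exact this
    set c : ℝ := (a + b) / 2 with hc
    have hbd : ∀ y, (δ y - c) ^ 2 ≤ S / 4 := by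
      intro y
      have h1 : δ y ≤ a := Finset.le_sup' δ (Finset.mem_univ y)
      have h2 : b ≤ δ y := Finset.inf'_le δ (Finset.mem_univ y)
      rw [hc]
      have key : (δ y - (a + b) / 2) ^ 2 = (a - b) ^ 2 / 4 - (a - δ y) * (δ y - b) := by
        ring
      have hp : 0 ≤ (a - δ y) * (δ y - b) :=
        mul_nonneg (sub_nonneg.2 h1) (sub_nonneg.2 h2)
      clear_value S a b c δ
      linarith
    -- sum identity
    have hid : ∑ y, ∑ y', (δ y - δ y') ^ 2
        = 2 * n * (∑ y, (δ y - c) ^ 2) - 2 * (∑ y, (δ y - c)) ^ 2 := by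
      have expand : ∀ y y' : Y, (δ y - δ y') ^ 2
          = (δ y - c) ^ 2 + (δ y' - c) ^ 2 - 2 * ((δ y - c) * (δ y' - c)) := by
        intro y y'; ring
      simp_rw [expand]
      simp [Finset.sum_add_distrib, Finset.sum_sub_distrib, ← Finset.mul_sum,
        ← Finset.sum_mul, Finset.card_univ, ← hn]
      ring
    have hsq : ∑ y, (δ y - c) ^ 2 ≤ n * (S / 4) := by
      calc ∑ y, (δ y - c) ^ 2 ≤ ∑ _y : Y, S / 4 := Finset.sum_le_sum fun y _ => hbd y
        _ = n * (S / 4) := by simp [Finset.card_univ, hn]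
    calc ∑ y, ∑ y', (M₁ x y y') ^ 2 = ∑ y, ∑ y', (δ y - δ y') ^ 2 := by
          simp_rw [hMδ]
      _ = 2 * n * (∑ y, (δ y - c) ^ 2) - 2 * (∑ y, (δ y - c)) ^ 2 := hid
      _ ≤ 2 * n * (n * (S / 4)) - 0 := by
          have := sq_nonneg (∑ y, (δ y - c))
          have h2n : (0:ℝ) ≤ 2 * n := by linarith
          nlinarith [hsq]
      _ = n ^ 2 * S / 2 := by ring
  have htot : ∑ x, ∑ y, ∑ y', (M₁ x y y') ^ 2 ≤ m * (n ^ 2 * S / 2) := by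
    calc ∑ x, ∑ y, ∑ y', (M₁ x y y') ^ 2 ≤ ∑ _x : X, n ^ 2 * S / 2 :=
          Finset.sum_le_sum fun x _ => hx x
      _ = m * (n ^ 2 * S / 2) := by simp [Finset.card_univ, hm]
  have hDist2 : Dist ^ 2 = (1 / (m * n ^ 2)) * ∑ x, ∑ y, ∑ y', (M₁ x y y') ^ 2 := by
    have hsum : (0:ℝ) ≤ ∑ x, ∑ y, ∑ y', (M₁ x y y') ^ 2 :=
      Finset.sum_nonneg fun x _ => Finset.sum_nonneg fun y _ =>
        Finset.sum_nonneg fun y' _ => sq_nonneg _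
    rw [hDist, Real.sq_sqrt (by positivity)]
  rw [hDist2, div_mul_eq_mul_div, one_mul, mul_div_assoc']
  rw [div_le_iff₀ (by positivity : (0:ℝ) < m * n ^ 2)]
  nlinarith [htot]
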